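/- (Lemma: linearity of identifiable functionals on the simplex.) Let C be a real L × N matrix such that every vector v in the kernel of C has coordinate sum zero (1ᵀv = 0). Let ℓ ∈ ℝ^N and suppose that the linear functional p ↦ ℓᵀp, restricted to the probability simplex Δ_{N−1} = {p ∈ ℝ^N : Σᵢ pᵢ = 1, pᵢ ≥ 0}, depends only on Cp; that is, for all p, p' ∈ Δ_{N−1}, C p = C p' implies ℓᵀp = ℓᵀp'. Then ℓ lies in the image of Cᵀ: there exists w ∈ ℝ^L with ℓ = Cᵀ w, and hence ℓᵀ p = wᵀ (C p) for all p ∈ Δ_{N−1}. -/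

import Mathlib

open Matrix

/-- Lemma: linearity of identifiable functionals on the simplex.
Let `C` be a real `L × N` matrix such that every vector in its kernel has coordinate sum zero.
If the linear functional `p ↦ ℓᵀp`, restricted to the probability simplex, depends only on
`C p`, then `ℓ` lies in the image of `Cᵀ`: there is `w` with `ℓ = Cᵀ w`, and hence
`ℓᵀ p = wᵀ (C p)` on the simplex. -/
theorem stmt_14 (L N : ℕ)
    (C : Matrix (Fin L) (Fin N) ℝ)
    (hker : ∀ v : Fin N → ℝ, C.mulVec v = 0 → ∑ i, v i = 0)
    (ℓ : Fin N → ℝ)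
    (hdep : ∀ p p' : Fin N → ℝ,
      (∀ i, 0 ≤ p i) → (∑ i, p i = 1) →
      (∀ i, 0 ≤ p' i) → (∑ i, p' i = 1) →
      C.mulVec p = C.mulVec p' → ℓ ⬝ᵥ p = ℓ ⬝ᵥ p') :
    ∃ w : Fin L → ℝ,
      ℓ = C.transpose.mulVec w ∧
      ∀ p : Fin N → ℝ, (∀ i, 0 ≤ p i) → (∑ i, p i = 1) →
        ℓ ⬝ᵥ p = w ⬝ᵥ C.mulVec p := by
  -- Step 1: ℓ vanishes on the kernel of C.
  have hperp : ∀ v : Fin N → ℝ, C.mulVec v = 0 → ℓ ⬝ᵥ v = 0 := by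
    intro v hv
    rcases Nat.eq_zero_or_pos N with hN | hN
    · subst hN; simp [dotProduct]
    · have hNpos : (0:ℝ) < N := by exact_mod_cast hN
      set S : ℝ := ∑ i, |v i| with hS
      have hS0 : 0 ≤ S := Finset.sum_nonneg fun i _ => abs_nonneg _
      have h1S : (0:ℝ) < 1 + S := by linarith
      set t : ℝ := (1 / N) / (1 + S) with ht
      have ht0 : 0 < t := by positivity
      set p : Fin N → ℝ := fun _ => 1 / N with hp
      set p' : Fin N → ℝ := p + t • v with hp'
      have hb : ∀ i, |t * v i| ≤ 1 / N := by
        intro i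
        have hvi : |v i| ≤ S :=
          Finset.single_le_sum (f := fun i => |v i|) (fun i _ => abs_nonneg _)
            (Finset.mem_univ i)
        rw [abs_mul, abs_of_pos ht0]
        have h1 : t * |v i| ≤ t * (1 + S) := by nlinarith
        have h2 : t * (1 + S) = 1 / N := by
          rw [ht]; field_simp
        linarith
      have hpnn : ∀ i, 0 ≤ p i := fun i => by positivity
      have hpsum : ∑ i, p i = 1 := by
        simp [hp, Finset.sum_const, Finset.card_univ]
        field_simp
      have hp'nn : ∀ i, 0 ≤ p' i := by
        intro i
        have := hb i
        have := neg_abs_le (t * v i)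
        simp only [hp', Pi.add_apply, Pi.smul_apply, smul_eq_mul, hp]
        linarith
      have hp'sum : ∑ i, p' i = 1 := by
        have hvsum : ∑ i, v i = 0 := hker v hv
        simp only [hp', Pi.add_apply, Pi.smul_apply, smul_eq_mul]
        rw [Finset.sum_add_distrib, ← Finset.mul_sum, hvsum, hpsum]
        ring
      have hCeq : C.mulVec p = C.mulVec p' := by
        rw [hp', Matrix.mulVec_add, Matrix.mulVec_smul, hv]
        simp
      have := hdep p p' hpnn hpsum hp'nn hp'sum hCeq
      rw [hp', dotProduct_add, dotProduct_smul, smul_eq_mul] at this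
      have hdv : t * (ℓ ⬝ᵥ v) = 0 := by linarith
      have := mul_eq_zero.mp hdv
      rcases this with h | h
      · exact absurd h (ne_of_gt ht0)
      · exact h
  -- Step 2: factor ℓ through the range of C.
  set f : (Fin N → ℝ) →ₗ[ℝ] (Fin L → ℝ) := C.mulVecLin with hf
  let φ : (Fin N → ℝ) →ₗ[ℝ] ℝ :=
    { toFun := fun v => ℓ ⬝ᵥ v
      map_add' := fun x y => dotProduct_add ℓ x y
      map_smul' := fun c x => by simp [dotProduct_smul] }
  have hle : LinearMap.ker f ≤ LinearMap.ker φ := by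
    intro v hv
    simp only [LinearMap.mem_ker, hf, Matrix.mulVecLin_apply] at hv
    exact hperp v hv
  let g : ((Fin N → ℝ) ⧸ LinearMap.ker f) →ₗ[ℝ] ℝ :=
    (LinearMap.ker f).liftQ φ hle
  let e := f.quotKerEquivRange
  let ψ₀ : (LinearMap.range f) →ₗ[ℝ] ℝ := g ∘ₗ (e.symm : _ →ₗ[ℝ] _)
  obtain ⟨ψ, hψ⟩ := ψ₀.exists_extend
  have hfac : ∀ x : Fin N → ℝ, ψ (f x) = ℓ ⬝ᵥ x := by
    intro x
    have hmem : f x ∈ LinearMap.range f := LinearMap.mem_range_self f x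
    have h1 : ψ (f x) = ψ₀ ⟨f x, hmem⟩ := by
      have := LinearMap.congr_fun hψ ⟨f x, hmem⟩
      simpa using this
    have h2 : e (Submodule.Quotient.mk x) = ⟨f x, hmem⟩ :=
      Subtype.ext (f.quotKerEquivRange_apply_mk x)
    have h3 : e.symm ⟨f x, hmem⟩ = Submodule.Quotient.mk x := by
      rw [← h2, LinearEquiv.symm_apply_apply]
    rw [h1]
    show g (e.symm ⟨f x, hmem⟩) = ℓ ⬝ᵥ x
    rw [h3]
    rfl
  set w : Fin L → ℝ := fun j => ψ ((Pi.single j (1:ℝ) : Fin L → ℝ)) with hw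
  have hψw : ∀ y : Fin L → ℝ, ψ y = w ⬝ᵥ y := by
    intro y
    have hy : y = ∑ j, y j • (Pi.single j (1:ℝ) : Fin L → ℝ) := by
      funext i
      simp [Pi.single_apply, Finset.sum_ite_eq', mul_comm]
    calc ψ y = ψ (∑ j, y j • (Pi.single j (1:ℝ) : Fin L → ℝ)) := by rw [← hy]
      _ = ∑ j, y j • ψ ((Pi.single j (1:ℝ) : Fin L → ℝ)) := by
          rw [map_sum]; simp
      _ = w ⬝ᵥ y := by
          simp [dotProduct, hw, smul_eq_mul, mul_comm]
  have hmain : ∀ v : Fin N → ℝ, ℓ ⬝ᵥ v = w ⬝ᵥ C.mulVec v := by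
    intro v
    rw [← hfac v, hψw]
    rfl
  refine ⟨w, ?_, fun p _ _ => hmain p⟩
  funext i
  have := hmain (Pi.single i 1)
  rw [dotProduct_single, mul_one] at this
  rw [this, Matrix.dotProduct_mulVec, ← Matrix.mulVec_transpose,
    dotProduct_single, mul_one]
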